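/- arXiv:2602.18410 — 2 statements merged into one kernel-verified Lean document; each statement's English description precedes it below -/
import Mathlib

section
/- Let $N \ge 1$ and suppose $\alpha_1,\dots,\alpha_N : \mathbb{N}_{\ge1} \to \mathbb{R}_{\ge0}$ and $\beta_1,\dots,\beta_N : \mathbb{N}_{\ge1} \to \mathbb{R}_{\ge0}$ are subadditive sequences, with limits $\alpha_i^\infty = \lim_p \alpha_i(p)/p$ and $\beta_i^\infty = \lim_q \beta_i(q)/q$, and $\beta_i^\infty > 0$ for all $i$. Define $L$ to be the infimum of all rationals $q/p > 0$ such that $\beta_i(qt) \ge \alpha_i(pt)$ for all $1 \le i \le N$ and all sufficiently large $t$. Then $L = \max_{1\le i\le N} \alpha_i^\infty / \beta_i^\infty$. -/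
open Filter Topology

private lemma aux_mul (u : ℕ → ℝ)
    (hsub : ∀ p p', 1 ≤ p → 1 ≤ p' → u (p + p') ≤ u p + u p') :
    ∀ p t, 1 ≤ p → 1 ≤ t → u (p * t) ≤ t * u p := by
  intro p t hp ht
  induction t with
  | zero => omega
  | succ n ih =>
    rcases Nat.eq_zero_or_pos n with h | h
    · subst h; simp
    · have h1 : u (p * n) ≤ n * u p := ih h
      have h2 : u (p * n + p) ≤ u (p * n) + u p :=
        hsub _ _ (Nat.one_le_iff_ne_zero.2 (by positivity)) hp
      have : p * (n + 1) = p * n + p := by ring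
      rw [this]
      push_cast
      linarith

private lemma aux_comp (u : ℕ → ℝ) (l : ℝ) (p : ℕ) (hp : 1 ≤ p)
    (hlim : Tendsto (fun n : ℕ => u n / n) atTop (𝓝 l)) :
    Tendsto (fun t : ℕ => u (p * t) / (p * t : ℕ)) atTop (𝓝 l) := by
  exact hlim.comp (tendsto_atTop_mono (fun t => Nat.le_mul_of_pos_left t hp) tendsto_id)

private lemma fekete (u : ℕ → ℝ) (l : ℝ)
    (hsub : ∀ p p', 1 ≤ p → 1 ≤ p' → u (p + p') ≤ u p + u p')
    (hlim : Tendsto (fun n : ℕ => u n / n) atTop (𝓝 l)) :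
    ∀ p, 1 ≤ p → l * p ≤ u p := by
  intro p hp
  have hp' : (0:ℝ) < p := by exact_mod_cast hp
  have hcomp := aux_comp u l p hp hlim
  have hle : ∀ᶠ t : ℕ in atTop, u (p * t) / ((p * t : ℕ) : ℝ) ≤ u p / p := by
    filter_upwards [eventually_ge_atTop 1] with t ht
    have h1 : u (p * t) ≤ t * u p := aux_mul u hsub p t hp ht
    have ht' : (0:ℝ) < t := by exact_mod_cast ht
    have hpt : (0:ℝ) < ((p * t : ℕ) : ℝ) := by push_cast; positivity
    rw [div_le_div_iff₀ hpt hp']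
    push_cast
    nlinarith
  have := le_of_tendsto hcomp hle
  calc l * p ≤ (u p / p) * p := by nlinarith
    _ = u p := by field_simp

/-- The numerical core of the finite-testing principle: for finitely many nonnegative
subadditive sequences `αᵢ, βᵢ` with limits `αᵢ^∞ = lim αᵢ(p)/p`, `βᵢ^∞ = lim βᵢ(q)/q > 0`,
the infimum `L` of admissible rationals `q/p` (those with `βᵢ(qt) ≥ αᵢ(pt)` for all `i`
and all large `t`) equals `max_i αᵢ^∞/βᵢ^∞`. -/
theorem stmt_2 (N : ℕ) (hN : 1 ≤ N) (α β : Fin N → ℕ → ℝ)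
    (hα0 : ∀ i p, 1 ≤ p → 0 ≤ α i p) (hβ0 : ∀ i p, 1 ≤ p → 0 ≤ β i p)
    (hαsub : ∀ i p p', 1 ≤ p → 1 ≤ p' → α i (p + p') ≤ α i p + α i p')
    (hβsub : ∀ i p p', 1 ≤ p → 1 ≤ p' → β i (p + p') ≤ β i p + β i p')
    (αinf βinf : Fin N → ℝ)
    (hαlim : ∀ i, Tendsto (fun p : ℕ => α i p / p) atTop (𝓝 (αinf i)))
    (hβlim : ∀ i, Tendsto (fun q : ℕ => β i q / q) atTop (𝓝 (βinf i)))
    (hβpos : ∀ i, 0 < βinf i) :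
    sInf {x : ℝ | ∃ q p : ℕ, 0 < p ∧ 0 < q ∧ x = (q : ℝ) / (p : ℝ) ∧
        ∃ T : ℕ, ∀ t, T ≤ t → ∀ i, α i (p * t) ≤ β i (q * t)}
      = ⨆ i, αinf i / βinf i := by
  have hNE : Nonempty (Fin N) := ⟨⟨0, hN⟩⟩
  set S := {x : ℝ | ∃ q p : ℕ, 0 < p ∧ 0 < q ∧ x = (q : ℝ) / (p : ℝ) ∧
        ∃ T : ℕ, ∀ t, T ≤ t → ∀ i, α i (p * t) ≤ β i (q * t)} with hS
  set M := ⨆ i, αinf i / βinf i with hM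
  have hα_nn : ∀ i, 0 ≤ αinf i := by
    intro i
    refine ge_of_tendsto (hαlim i) ?_
    filter_upwards [eventually_ge_atTop 1] with p hp
    have : (0:ℝ) < p := by exact_mod_cast hp
    exact div_nonneg (hα0 i p hp) this.le
  have hbddA : BddAbove (Set.range fun i => αinf i / βinf i) :=
    Set.Finite.bddAbove (Set.finite_range _)
  have hM0 : 0 ≤ M := by
    refine le_trans ?_ (le_ciSup hbddA ⟨0, hN⟩)
    exact div_nonneg (hα_nn _) (hβpos _).le
  -- construction: every rational above M is in S
  have key : ∀ q p : ℕ, 0 < p → 0 < q → M < (q:ℝ)/p → ((q:ℝ)/p) ∈ S := by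
    intro q p hp hq hlt
    refine ⟨q, p, hp, hq, rfl, ?_⟩
    have hp' : (0:ℝ) < p := by exact_mod_cast hp
    have hq' : (0:ℝ) < q := by exact_mod_cast hq
    have hev : ∀ᶠ t : ℕ in atTop, ∀ i, α i (p * t) ≤ β i (q * t) := by
      rw [eventually_all]
      intro i
      have hiM : αinf i / βinf i ≤ M := le_ciSup hbddA i
      have h1 : αinf i * p < βinf i * q := by
        have := lt_of_le_of_lt hiM hlt
        rw [div_lt_div_iff₀ (hβpos i) hp'] at this
        linarith
      set δ : ℝ := (βinf i * q - αinf i * p) / p with hδdef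
      have hδ : 0 < δ := by apply div_pos; linarith; exact hp'
      have hcomp := aux_comp (α i) (αinf i) p hp (hαlim i)
      have hev1 : ∀ᶠ t : ℕ in atTop,
          α i (p * t) / ((p * t : ℕ) : ℝ) < αinf i + δ :=
        hcomp.eventually_lt_const (lt_add_of_pos_right _ hδ)
      filter_upwards [hev1, eventually_ge_atTop 1] with t h2 ht
      have ht' : (0:ℝ) < t := by exact_mod_cast ht
      have hpt : (0:ℝ) < ((p * t : ℕ) : ℝ) := by push_cast; positivity
      have h3 : α i (p * t) < (αinf i + δ) * ((p * t : ℕ) : ℝ) :=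
        (div_lt_iff₀ hpt).1 h2
      have h4 : (αinf i + δ) * ((p * t : ℕ) : ℝ) = βinf i * q * t := by
        rw [hδdef]; push_cast; field_simp; ring
      have h5 : βinf i * ((q * t : ℕ) : ℝ) ≤ β i (q * t) :=
        fekete (β i) (βinf i) (hβsub i) (hβlim i) (q * t)
          (Nat.one_le_iff_ne_zero.2 (by positivity))
      refine le_of_lt ?_
      calc α i (p * t) < βinf i * q * t := by rw [← h4]; exact h3
        _ = βinf i * ((q * t : ℕ) : ℝ) := by push_cast; ring
        _ ≤ β i (q * t) := h5
    rcases (eventually_atTop).1 hev with ⟨T, hT⟩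
    exact ⟨T, hT⟩
  -- lower bound: M ≤ x for all x ∈ S
  have lb : ∀ x ∈ S, M ≤ x := by
    rintro x ⟨q, p, hp, hq, rfl, T, hT⟩
    have hp' : (0:ℝ) < p := by exact_mod_cast hp
    have hq' : (0:ℝ) < q := by exact_mod_cast hq
    refine ciSup_le fun i => ?_
    have h1 := aux_comp (α i) (αinf i) p hp (hαlim i)
    have h2 : Tendsto (fun t : ℕ => β i (q * t) / ((q * t : ℕ) : ℝ) * ((q:ℝ)/p))
        atTop (𝓝 (βinf i * ((q:ℝ)/p))) :=
      (aux_comp (β i) (βinf i) q hq (hβlim i)).mul_const _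
    have hle : αinf i ≤ βinf i * ((q:ℝ)/p) := by
      refine le_of_tendsto_of_tendsto h1 h2 ?_
      filter_upwards [eventually_ge_atTop (max T 1)] with t h
      have hTt : T ≤ t := le_trans (le_max_left _ _) h
      have ht1 : 1 ≤ t := le_trans (le_max_right _ _) h
      have ht' : (0:ℝ) < t := by exact_mod_cast ht1
      have hαβ := hT t hTt i
      have hpt : (0:ℝ) < ((p * t : ℕ) : ℝ) := by push_cast; positivity
      have hqt : (0:ℝ) < ((q * t : ℕ) : ℝ) := by push_cast; positivity
      have heq : β i (q * t) / ((q * t : ℕ) : ℝ) * ((q:ℝ)/p)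
          = β i (q * t) / ((p * t : ℕ) : ℝ) := by
        push_cast; field_simp
      show α i (p * t) / ((p * t : ℕ) : ℝ) ≤ _
      rw [heq]
      gcongr
    rw [div_le_iff₀ (hβpos i)]
    linarith [hle]
  have hbddS : BddBelow S := ⟨0, by
    rintro x ⟨q, p, hp, hq, rfl, _⟩
    positivity⟩
  -- nonempty
  have ratmem : ∀ r : ℚ, M < (r:ℝ) →
      ((r.num.toNat : ℝ)) / (r.den : ℝ) ∈ S ∧ ((r.num.toNat : ℝ)) / (r.den : ℝ) = (r:ℝ) := by
    intro r hr
    have hr0 : (0:ℝ) < r := lt_of_le_of_lt hM0 hr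
    have hrq : 0 < r.num := Rat.num_pos.2 (by exact_mod_cast hr0)
    have h1 : ((r.num.toNat : ℝ)) = (r.num : ℝ) := by
      exact_mod_cast Int.toNat_of_nonneg hrq.le
    have hcast : ((r.num.toNat : ℝ)) / (r.den : ℝ) = (r : ℝ) := by
      rw [h1, Rat.cast_def]
    exact ⟨key _ _ r.pos (by omega) (by rw [hcast]; exact hr), hcast⟩
  have hSne : S.Nonempty := by
    obtain ⟨r, hr⟩ := exists_rat_gt M
    exact ⟨_, (ratmem r hr).1⟩
  apply le_antisymm
  · by_contra h
    push_neg at h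
    obtain ⟨r, hr1, hr2⟩ := exists_rat_btwn h
    obtain ⟨hmem, hcast⟩ := ratmem r hr1
    have := csInf_le hbddS hmem
    rw [hcast] at this
    exact absurd (lt_of_le_of_lt this hr2) (lt_irrefl _)
  · exact le_csInf hSne lb
end

section
/- Let $\mathfrak{a}_p \subseteq k[[x,y]]$ be the monomial ideal generated by all monomials $x^i y^j$ with $i + 2j \ge 3p$, and $\mathfrak{b}_q$ the monomial ideal generated by all $x^i y^j$ with $2i + j \ge 5q$. Then for positive integers $p, q$: $\mathfrak{b}_{qt} \subseteq \mathfrak{a}_{pt}$ for all $t \ge 1$ if and only if $q/p \ge 6/5$. Moreover each $\mathfrak{a}_p$ is integrally closed, so the Łojasiewicz exponent of the filtration pair is $6/5$. -/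
/-- Integral closure of an ideal via equations of integral dependence. -/
def idealIntClosure {R : Type*} [CommRing R] (I : Ideal R) : Set R :=
  {x | ∃ n : ℕ, 0 < n ∧ ∃ c : ℕ → R,
    (∀ i, 1 ≤ i → i ≤ n → c i ∈ I ^ i) ∧
    x ^ n + ∑ i ∈ Finset.Icc 1 n, c i * x ^ (n - i) = 0}

/-- `𝔞_p ⊆ k[[x,y]]`: the monomial ideal generated by all `x^i y^j` with `i + 2j ≥ 3p`. -/
noncomputable def aId (k : Type*) [Field k] (p : ℕ) : Ideal (MvPowerSeries (Fin 2) k) :=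
  Ideal.span {m : MvPowerSeries (Fin 2) k | ∃ i j : ℕ, 3 * p ≤ i + 2 * j ∧
    m = (MvPowerSeries.X 0 : MvPowerSeries (Fin 2) k) ^ i *
        (MvPowerSeries.X 1 : MvPowerSeries (Fin 2) k) ^ j}

/-- `𝔟_q ⊆ k[[x,y]]`: the monomial ideal generated by all `x^i y^j` with `2i + j ≥ 5q`. -/
noncomputable def bId (k : Type*) [Field k] (q : ℕ) : Ideal (MvPowerSeries (Fin 2) k) :=
  Ideal.span {m : MvPowerSeries (Fin 2) k | ∃ i j : ℕ, 5 * q ≤ 2 * i + j ∧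
    m = (MvPowerSeries.X 0 : MvPowerSeries (Fin 2) k) ^ i *
        (MvPowerSeries.X 1 : MvPowerSeries (Fin 2) k) ^ j}

/-! ### Auxiliary weight machinery -/

noncomputable section LojAux

open MvPowerSeries Finsupp

variable (k : Type*) [Field k]

local notation "R2" => MvPowerSeries (Fin 2) k

/-- weight with `x` of weight 1, `y` of weight 2 -/
def wtA (d : Fin 2 →₀ ℕ) : ℕ := d 0 + 2 * d 1

lemma wtA_add (a b : Fin 2 →₀ ℕ) : wtA (a + b) = wtA a + wtA b := by
  simp [wtA, Finsupp.add_apply]; ring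

/-- the ideal of series all of whose coefficients in weight `< N` vanish -/
def wtId (N : ℕ) : Ideal R2 where
  carrier := {f | ∀ d, wtA d < N → MvPowerSeries.coeff d f = 0}
  zero_mem' := by intro d _; simp
  add_mem' := by intro f g hf hg d hd; simp [map_add, hf d hd, hg d hd]
  smul_mem' := by
    classical
    intro c f hf d hd
    rw [smul_eq_mul, MvPowerSeries.coeff_mul]
    apply Finset.sum_eq_zero
    rintro ⟨u, v⟩ hm
    rw [Finset.HasAntidiagonal.mem_antidiagonal] at hm
    have hv : wtA v < N := by
      have := wtA_add u v
      rw [hm] at this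
      omega
    simp [hf v hv]

lemma mem_wtId {N : ℕ} {f : R2} :
    f ∈ wtId k N ↔ ∀ d, wtA d < N → MvPowerSeries.coeff d f = 0 := Iff.rfl

lemma wtId_anti {M N : ℕ} (h : M ≤ N) : wtId k N ≤ wtId k M := by
  intro f hf d hd
  exact hf d (lt_of_lt_of_le hd h)

lemma mul_mem_wtId {a b : ℕ} {f g : R2}
    (hf : f ∈ wtId k a) (hg : g ∈ wtId k b) : f * g ∈ wtId k (a + b) := by
  classical
  intro d hd
  rw [MvPowerSeries.coeff_mul]
  apply Finset.sum_eq_zero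
  rintro ⟨u, v⟩ hm
  rw [Finset.HasAntidiagonal.mem_antidiagonal] at hm
  have hw : wtA u + wtA v = wtA d := by rw [← wtA_add, hm]
  by_cases hu : wtA u < a
  · simp [hf u hu]
  · have hv : wtA v < b := by omega
    simp [hg v hv]

lemma pow_mem_wtId {a : ℕ} {f : R2}
    (hf : f ∈ wtId k a) (n : ℕ) : f ^ n ∈ wtId k (n * a) := by
  induction n with
  | zero => intro d hd; omega
  | succ n ih =>
      rw [pow_succ]
      have := mul_mem_wtId k ih hf
      have heq : n * a + a = (n + 1) * a := by ring
      rwa [heq] at this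

lemma wtId_pow_le (a n : ℕ) : (wtId k a) ^ n ≤ wtId k (n * a) := by
  induction n with
  | zero => rw [pow_zero, Ideal.one_eq_top]; intro f _ d hd; omega
  | succ n ih =>
      rw [pow_succ]
      refine le_trans (Ideal.mul_le.mpr fun f hf g hg => ?_) (le_refl _)
      have := mul_mem_wtId k (ih hf) hg
      have heq : n * a + a = (n + 1) * a := by ring
      rwa [heq] at this

/-- weighted homogeneous component as a raw function -/
def wcomp (a : ℕ) (f : R2) : R2 :=
  fun d => if wtA d = a then MvPowerSeries.coeff d f else 0

lemma coeff_wcomp (a : ℕ) (f : R2) (d : Fin 2 →₀ ℕ) :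
    MvPowerSeries.coeff d (wcomp k a f) =
      if wtA d = a then MvPowerSeries.coeff d f else 0 := rfl

/-- key "domain" fact: bottom weighted components multiply without cancellation -/
lemma mul_not_mem_aux {a b : ℕ} {f g : R2}
    (hfa : ∀ d, wtA d < a → MvPowerSeries.coeff d f = 0)
    (hfa' : ∃ d, wtA d = a ∧ MvPowerSeries.coeff d f ≠ 0)
    (hgb : ∀ d, wtA d < b → MvPowerSeries.coeff d g = 0)
    (hgb' : ∃ d, wtA d = b ∧ MvPowerSeries.coeff d g ≠ 0) :
    ∃ d, wtA d = a + b ∧ MvPowerSeries.coeff d (f * g) ≠ 0 := by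
  classical
  have hf0 : wcomp k a f ≠ 0 := by
    obtain ⟨d, hd, hne⟩ := hfa'
    intro h0
    apply hne
    have := congrArg (MvPowerSeries.coeff d) h0
    rwa [coeff_wcomp, if_pos hd, map_zero] at this
  have hg0 : wcomp k b g ≠ 0 := by
    obtain ⟨d, hd, hne⟩ := hgb'
    intro h0
    apply hne
    have := congrArg (MvPowerSeries.coeff d) h0
    rwa [coeff_wcomp, if_pos hd, map_zero] at this
  have hmul : wcomp k a f * wcomp k b g ≠ 0 := mul_ne_zero hf0 hg0
  obtain ⟨d, hd⟩ : ∃ d, MvPowerSeries.coeff d (wcomp k a f * wcomp k b g) ≠ 0 := by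
    by_contra h
    push_neg at h
    exact hmul (MvPowerSeries.ext h)
  have hwd : wtA d = a + b := by
    by_contra hne
    apply hd
    rw [MvPowerSeries.coeff_mul]
    apply Finset.sum_eq_zero
    rintro ⟨u, v⟩ hm
    rw [Finset.HasAntidiagonal.mem_antidiagonal] at hm
    have hw : wtA u + wtA v = wtA d := by rw [← wtA_add, hm]
    simp only [coeff_wcomp]
    by_cases hu : wtA u = a
    · by_cases hv : wtA v = b
      · exact absurd (by omega) hne
      · simp [hv]
    · simp [hu]
  refine ⟨d, hwd, ?_⟩
  have : MvPowerSeries.coeff d (f * g) =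
      MvPowerSeries.coeff d (wcomp k a f * wcomp k b g) := by
    rw [MvPowerSeries.coeff_mul, MvPowerSeries.coeff_mul]
    apply Finset.sum_congr rfl
    rintro ⟨u, v⟩ hm
    rw [Finset.HasAntidiagonal.mem_antidiagonal] at hm
    have hw : wtA u + wtA v = a + b := by rw [← wtA_add, hm, hwd]
    simp only [coeff_wcomp]
    by_cases hu : wtA u = a
    · have hv : wtA v = b := by omega
      rw [if_pos hu, if_pos hv]
    · by_cases hu' : wtA u < a
      · rw [hfa u hu', if_neg hu, zero_mul, zero_mul]
      · have hv : wtA v < b := by omega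
        rw [hgb v hv, if_neg (by omega : ¬ wtA v = b), mul_zero, mul_zero]
  rw [this]
  exact hd

lemma pow_bottom {a : ℕ} {f : R2}
    (hf : f ∈ wtId k a) (hf' : ∃ d, wtA d = a ∧ MvPowerSeries.coeff d f ≠ 0) (n : ℕ) :
    ∃ d, wtA d = n * a ∧ MvPowerSeries.coeff d (f ^ n) ≠ 0 := by
  induction n with
  | zero =>
      refine ⟨0, by simp [wtA], ?_⟩
      rw [pow_zero, MvPowerSeries.coeff_zero_one]
      exact one_ne_zero
  | succ n ih =>
      obtain ⟨d, hd, hne⟩ := ih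
      have := mul_not_mem_aux k (a := n * a) (b := a) (f := f ^ n) (g := f)
        (pow_mem_wtId k hf n) ⟨d, hd, hne⟩ hf hf'
      obtain ⟨d', hd', hne'⟩ := this
      rw [← pow_succ] at hne'
      exact ⟨d', by rw [hd']; ring, hne'⟩

/-- span of high weight monomials contains everything of high weighted order -/
lemma wtId_le_span (N : ℕ) (f : R2)
    (hf : ∀ d, wtA d < N → MvPowerSeries.coeff d f = 0) :
    f ∈ Ideal.span {m : R2 | ∃ i j : ℕ, N ≤ i + 2 * j ∧
      m = (MvPowerSeries.X 0 : R2) ^ i * (MvPowerSeries.X 1 : R2) ^ j} := by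
  classical
  set c : ℕ := (N + 1) / 2 with hc
  set e : ℕ → (Fin 2 →₀ ℕ) := fun j => single 0 (N - 2 * j) + single 1 j with he
  have he0 : ∀ j, e j 0 = N - 2 * j := by
    intro j; simp [he, Finsupp.add_apply, Finsupp.single_apply]
  have he1 : ∀ j, e j 1 = j := by
    intro j; simp [he, Finsupp.add_apply, Finsupp.single_apply]
  set h : ℕ → R2 := fun j =>
    (fun d' => if min ((e j + d') 1) c = j
      then MvPowerSeries.coeff (e j + d') f else 0 : (Fin 2 →₀ ℕ) → k) with hh
  have coeff_h : ∀ j d', MvPowerSeries.coeff d' (h j) =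
      if min ((e j + d') 1) c = j then MvPowerSeries.coeff (e j + d') f else 0 := by
    intro j d'; rfl
  have key : f = ∑ j ∈ Finset.range (c + 1), MvPowerSeries.monomial (e j) 1 * h j := by
    apply MvPowerSeries.ext
    intro d
    rw [map_sum]
    have hterm : ∀ j ∈ Finset.range (c + 1),
        MvPowerSeries.coeff d (MvPowerSeries.monomial (e j) 1 * h j)
          = if j = min (d 1) c then (if e j ≤ d then MvPowerSeries.coeff d f else 0)
            else 0 := by
      intro j hj
      rw [MvPowerSeries.coeff_monomial_mul]
      by_cases h1 : e j ≤ d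
      · rw [if_pos h1, one_mul, coeff_h, add_tsub_cancel_of_le h1]
        by_cases h2 : min (d 1) c = j
        · rw [if_pos h2, if_pos h2.symm, if_pos h1]
        · rw [if_neg h2, if_neg (fun hh' => h2 hh'.symm)]
      · rw [if_neg h1]
        by_cases h2 : j = min (d 1) c
        · rw [if_pos h2, if_neg h1]
        · rw [if_neg h2]
    rw [Finset.sum_congr rfl hterm, Finset.sum_ite_eq' (Finset.range (c + 1)) (min (d 1) c)]
    have hmem : min (d 1) c ∈ Finset.range (c + 1) := by
      exact Finset.mem_range.mpr (by omega)
    rw [if_pos hmem]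
    by_cases h1 : e (min (d 1) c) ≤ d
    · rw [if_pos h1]
    · rw [if_neg h1]
      by_cases h2 : wtA d < N
      · exact hf d h2
      · exfalso
        apply h1
        rw [Finsupp.le_def]
        intro i
        have hwt : N ≤ d 0 + 2 * d 1 := by simpa [wtA] using h2
        fin_cases i
        · show (e (min (d 1) c)) 0 ≤ d 0
          rw [he0]; omega
        · show (e (min (d 1) c)) 1 ≤ d 1
          rw [he1]; omega
  rw [key]
  apply Ideal.sum_mem
  intro j hj
  apply Ideal.mul_mem_right
  apply Ideal.subset_span
  refine ⟨N - 2 * j, j, by omega, ?_⟩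
  rw [MvPowerSeries.X_pow_eq, MvPowerSeries.X_pow_eq, MvPowerSeries.monomial_mul_monomial,
    one_mul]

lemma aId_eq (r : ℕ) : aId k r = wtId k (3 * r) := by
  apply le_antisymm
  · rw [aId, Ideal.span_le]
    rintro m ⟨i, j, hij, rfl⟩
    intro d hd
    rw [MvPowerSeries.X_pow_eq, MvPowerSeries.X_pow_eq, MvPowerSeries.monomial_mul_monomial,
      one_mul, MvPowerSeries.coeff_monomial]
    classical
    rw [if_neg]
    intro hde
    have : wtA d = i + 2 * j := by
      rw [hde]
      simp [wtA, Finsupp.add_apply, Finsupp.single_apply]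
    omega
  · intro f hf
    exact wtId_le_span k (3 * r) f hf

lemma X0_pow_not_mem_aId {r i : ℕ} (hi : i < 3 * r) :
    ((MvPowerSeries.X 0 : R2) ^ i) ∉ aId k r := by
  rw [aId_eq]
  intro hmem
  have := hmem (single 0 i) (by simp [wtA, Finsupp.single_apply]; omega)
  rw [MvPowerSeries.X_pow_eq, MvPowerSeries.coeff_monomial_same] at this
  exact one_ne_zero this

lemma X0_pow_mem_bId {q i : ℕ} (hi : 5 * q ≤ 2 * i) :
    ((MvPowerSeries.X 0 : R2) ^ i) ∈ bId k q := by
  apply Ideal.subset_span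
  exact ⟨i, 0, by omega, by rw [pow_zero, mul_one]⟩

lemma bId_le_aId {p q : ℕ} (h : 6 * p ≤ 5 * q) (t : ℕ) :
    bId k (q * t) ≤ aId k (p * t) := by
  rw [bId, Ideal.span_le]
  rintro m ⟨i, j, hij, rfl⟩
  apply Ideal.subset_span
  refine ⟨i, j, ?_, rfl⟩
  have h1 : 6 * (p * t) ≤ 5 * (q * t) := by
    calc 6 * (p * t) = (6 * p) * t := by ring
    _ ≤ (5 * q) * t := Nat.mul_le_mul_right t h
    _ = 5 * (q * t) := by ring
  omega

/-- integral closedness of `aId` -/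
lemma intClosure_aId_eq (r : ℕ) :
    idealIntClosure (aId k r) = (↑(aId k r) : Set R2) := by
  classical
  ext x
  constructor
  · rintro ⟨n, hn, c, hc, heq⟩
    show x ∈ aId k r
    rw [aId_eq]
    by_contra hx
    rw [mem_wtId] at hx
    push_neg at hx
    obtain ⟨d0, hd0, hne0⟩ := hx
    have hPex : ∃ m : ℕ, ∃ d, wtA d = m ∧ MvPowerSeries.coeff d x ≠ 0 :=
      ⟨wtA d0, d0, rfl, hne0⟩
    set ω := Nat.find hPex with hω
    obtain ⟨dω, hdω, hneω⟩ := Nat.find_spec hPex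
    have hωle : ω ≤ wtA d0 := Nat.find_le ⟨d0, rfl, hne0⟩
    have hω3r : ω < 3 * r := lt_of_le_of_lt hωle hd0
    have hxmem : x ∈ wtId k ω := by
      intro d hd
      by_contra hne
      exact Nat.find_min hPex hd ⟨d, rfl, hne⟩
    obtain ⟨D, hD, hDne⟩ := pow_bottom k hxmem ⟨dω, hdω, hneω⟩ n
    have hxn : x ^ n = -(∑ i ∈ Finset.Icc 1 n, c i * x ^ (n - i)) :=
      eq_neg_of_add_eq_zero_left heq
    have hsum : (∑ i ∈ Finset.Icc 1 n, c i * x ^ (n - i)) ∈ wtId k (n * ω + 1) := by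
      apply Ideal.sum_mem
      intro i hi
      rw [Finset.mem_Icc] at hi
      have hci : c i ∈ wtId k (i * (3 * r)) := by
        apply wtId_pow_le k (3 * r) i
        have hle : aId k r ≤ wtId k (3 * r) := le_of_eq (aId_eq k r)
        exact Ideal.pow_right_mono hle i (hc i hi.1 hi.2)
      have hxp : x ^ (n - i) ∈ wtId k ((n - i) * ω) := pow_mem_wtId k hxmem (n - i)
      have hprod := mul_mem_wtId k hci hxp
      refine wtId_anti k ?_ hprod
      have h1 : i * (ω + 1) ≤ i * (3 * r) := Nat.mul_le_mul_left i (by omega)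
      have h2 : (n - i) * ω + i * ω = n * ω := by
        rw [← Nat.add_mul, Nat.sub_add_cancel hi.2]
      have h3 : i * (ω + 1) = i * ω + i := by ring
      omega
    have hfin : x ^ n ∈ wtId k (n * ω + 1) := by
      rw [hxn]; exact neg_mem hsum
    exact hDne (hfin D (by rw [hD]; omega))
  · intro hx
    refine ⟨1, one_pos, fun _ => -x, ?_, ?_⟩
    · intro i h1 h2
      have hi : i = 1 := le_antisymm h2 h1
      subst hi
      rw [pow_one]
      exact neg_mem hx
    · simp

lemma ratio_le_iff {p q : ℕ} (hp : 0 < p) :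
    ((6 : ℝ) / 5 ≤ (q : ℝ) / (p : ℝ)) ↔ 6 * p ≤ 5 * q := by
  rw [div_le_div_iff₀ (by norm_num : (0 : ℝ) < 5) (by exact_mod_cast hp : (0 : ℝ) < (p : ℝ))]
  rw [show (6 : ℝ) * p = ((6 * p : ℕ) : ℝ) by push_cast; ring,
    show (q : ℝ) * 5 = ((5 * q : ℕ) : ℝ) by push_cast; ring]
  exact Nat.cast_le

end LojAux

/-- Each `𝔞_p` is integrally closed; for positive `p, q` one has
`𝔟_{qt} ⊆ 𝔞_{pt}` for all `t ≥ 1` iff `q/p ≥ 6/5`; and the Łojasiewicz exponent of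
the filtration pair `(𝔞_•, 𝔟_•)` equals `6/5`. -/
theorem stmt_5 (k : Type*) [Field k] (p q : ℕ) (hp : 0 < p) (hq : 0 < q) :
    (∀ r : ℕ, 0 < r → idealIntClosure (aId k r) = (↑(aId k r) : Set (MvPowerSeries (Fin 2) k))) ∧
    ((∀ t : ℕ, 1 ≤ t → bId k (q * t) ≤ aId k (p * t)) ↔ (6 : ℝ) / 5 ≤ (q : ℝ) / (p : ℝ)) ∧
    sInf {x : ℝ | ∃ p' q' : ℕ, 0 < p' ∧ 0 < q' ∧ x = (q' : ℝ) / (p' : ℝ) ∧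
        ∃ T : ℕ, ∀ t, T ≤ t →
          (↑(bId k (q' * t)) : Set (MvPowerSeries (Fin 2) k)) ⊆
            idealIntClosure (aId k (p' * t))}
      = 6 / 5 := by
  refine ⟨fun r _ => intClosure_aId_eq k r, ?_, ?_⟩
  · constructor
    · intro h
      rw [ratio_le_iff hp]
      by_contra h6
      push_neg at h6
      have hX : ((MvPowerSeries.X 0 : MvPowerSeries (Fin 2) k) ^ (5 * q)) ∈ bId k (q * 2) :=
        X0_pow_mem_bId k (by omega)
      have := h 2 (by norm_num) hX
      exact X0_pow_not_mem_aId k (by omega) this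
    · intro h t _
      exact bId_le_aId k ((ratio_le_iff hp).mp h) t
  · -- the sInf computation
    have hmemE : ∀ x ∈ {x : ℝ | ∃ p' q' : ℕ, 0 < p' ∧ 0 < q' ∧ x = (q' : ℝ) / (p' : ℝ) ∧
        ∃ T : ℕ, ∀ t, T ≤ t →
          (↑(bId k (q' * t)) : Set (MvPowerSeries (Fin 2) k)) ⊆
            idealIntClosure (aId k (p' * t))}, (6 : ℝ) / 5 ≤ x := by
      rintro x ⟨p', q', hp', hq', rfl, T, hT⟩
      rw [ratio_le_iff hp']
      -- use t = 2 * max T 1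
      set M : ℕ := max T 1 with hM
      have hM1 : 1 ≤ M := le_max_right T 1
      have hXmem : ((MvPowerSeries.X 0 : MvPowerSeries (Fin 2) k) ^ (5 * q' * M))
          ∈ bId k (q' * (2 * M)) := by
        apply X0_pow_mem_bId
        calc 5 * (q' * (2 * M)) = 2 * (5 * q' * M) := by ring
        _ ≤ 2 * (5 * q' * M) := le_rfl
      have hsub := hT (2 * M) (le_trans (le_max_left T 1) (by omega))
      have hmem2 := hsub hXmem
      rw [intClosure_aId_eq] at hmem2
      by_contra h6
      push_neg at h6
      have hlt : 5 * q' * M < 3 * (p' * (2 * M)) := by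
        have : (5 * q') * M < (6 * p') * M := by
          apply Nat.mul_lt_mul_of_lt_of_le (by omega) (le_refl M) (by omega)
        calc 5 * q' * M < (6 * p') * M := this
        _ = 3 * (p' * (2 * M)) := by ring
      exact X0_pow_not_mem_aId k hlt hmem2
    have h65 : (6 : ℝ) / 5 ∈ {x : ℝ | ∃ p' q' : ℕ, 0 < p' ∧ 0 < q' ∧ x = (q' : ℝ) / (p' : ℝ) ∧
        ∃ T : ℕ, ∀ t, T ≤ t →
          (↑(bId k (q' * t)) : Set (MvPowerSeries (Fin 2) k)) ⊆
            idealIntClosure (aId k (p' * t))} := by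
      refine ⟨5, 6, by norm_num, by norm_num, by norm_num, 0, fun t _ => ?_⟩
      intro z hz
      have := bId_le_aId k (p := 5) (q := 6) (by norm_num) t hz
      rw [intClosure_aId_eq]
      exact this
    apply le_antisymm
    · exact csInf_le ⟨6 / 5, hmemE⟩ h65
    · exact le_csInf ⟨6 / 5, h65⟩ hmemE
end
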